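/- Let f : ℝ → ℝ be 𝒜-continuous on [0,1], i.e. for every open G ⊆ ℝ the set {x ∈ [0,1] : f(x) ∈ G} equals O ∩ C where O is open and C is regular closed, both in the subspace topology of [0,1]. Then for every real q: there exists x ∈ [0,1] with f(x) > q if and only if there exists a rational r ∈ [0,1] with f(r) > q. -/
import Mathlib

/-- In any open set of ℝ meeting [0,1], there is a rational of [0,1]. -/
lemma rat_in_open_Icc {V : Set ℝ} (hV : IsOpen V) {x : ℝ}
    (hx : x ∈ Set.Icc (0:ℝ) 1) (hxV : x ∈ V) :
    ∃ r : ℚ, (r : ℝ) ∈ Set.Icc (0:ℝ) 1 ∧ (r : ℝ) ∈ V := by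
  obtain ⟨ε, hε, hball⟩ := Metric.isOpen_iff.mp hV x hxV
  obtain ⟨hx0, hx1⟩ := hx
  rcases lt_or_eq_of_le hx1 with h1 | h1
  · obtain ⟨r, hr1, hr2⟩ := exists_rat_btwn (lt_min (show x < x + ε by linarith) h1)
    refine ⟨r, ⟨le_of_lt (lt_of_le_of_lt hx0 hr1), le_of_lt (lt_of_lt_of_le hr2 (min_le_right _ _))⟩, ?_⟩
    apply hball
    rw [Metric.mem_ball, Real.dist_eq, abs_lt]
    constructor
    · linarith
    · have := lt_of_lt_of_le hr2 (min_le_left _ _); linarith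
  · obtain ⟨r, hr1, hr2⟩ := exists_rat_btwn (show max (x - ε) 0 < x by
      subst h1; exact max_lt (by linarith) one_pos)
    refine ⟨r, ⟨le_of_lt (lt_of_le_of_lt (le_max_right _ _) hr1), by subst h1; linarith⟩, ?_⟩
    apply hball
    rw [Metric.mem_ball, Real.dist_eq, abs_lt]
    have := lt_of_le_of_lt (le_max_left _ _) hr1
    constructor <;> linarith

theorem AContinuous_sup_rational (f : ℝ → ℝ)
    (hf : ∀ G : Set ℝ, IsOpen G →
      ∃ O C : Set (Set.Icc (0:ℝ) 1), IsOpen O ∧ C = closure (interior C) ∧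
        ({x : Set.Icc (0:ℝ) 1 | f ↑x ∈ G} : Set (Set.Icc (0:ℝ) 1)) = O ∩ C) :
    ∀ q : ℝ, (∃ x ∈ Set.Icc (0:ℝ) 1, f x > q) ↔
      (∃ r : ℚ, (r : ℝ) ∈ Set.Icc (0:ℝ) 1 ∧ f r > q) := by
  intro q
  constructor
  · rintro ⟨x, hx, hfx⟩
    obtain ⟨O, C, hO, hC, hOC⟩ := hf (Set.Ioi q) isOpen_Ioi
    have hxmem : (⟨x, hx⟩ : Set.Icc (0:ℝ) 1) ∈ O ∩ C := by
      rw [← hOC]; exact hfx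
    -- O ∩ interior C is nonempty
    have hne : (O ∩ interior C).Nonempty := by
      have hcl : (⟨x, hx⟩ : Set.Icc (0:ℝ) 1) ∈ closure (interior C) := by
        rw [← hC]; exact hxmem.2
      obtain ⟨y, hy⟩ := mem_closure_iff.mp hcl O hO hxmem.1
      exact ⟨y, hy⟩
    obtain ⟨y, hyO, hyI⟩ := hne
    -- O ∩ interior C is open in the subtype
    have hopen : IsOpen (O ∩ interior C) := hO.inter isOpen_interior
    obtain ⟨V, hV, hVeq⟩ := isOpen_induced_iff.mp hopen
    have hyV : (y : ℝ) ∈ V := by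
      have : y ∈ Subtype.val ⁻¹' V := hVeq ▸ (⟨hyO, hyI⟩ : y ∈ O ∩ interior C)
      exact this
    obtain ⟨r, hrIcc, hrV⟩ := rat_in_open_Icc hV y.2 hyV
    refine ⟨r, hrIcc, ?_⟩
    have : (⟨(r:ℝ), hrIcc⟩ : Set.Icc (0:ℝ) 1) ∈ O ∩ C := by
      have hmem : (⟨(r:ℝ), hrIcc⟩ : Set.Icc (0:ℝ) 1) ∈ O ∩ interior C := by
        have : (⟨(r:ℝ), hrIcc⟩ : Set.Icc (0:ℝ) 1) ∈ Subtype.val ⁻¹' V := hrV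
        rwa [hVeq] at this
      exact ⟨hmem.1, interior_subset hmem.2⟩
    rw [← hOC] at this
    exact this
  · rintro ⟨r, hr, hfr⟩
    exact ⟨r, hr, hfr⟩
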